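/- arXiv:2108.04985 — 3 statements merged into one kernel-verified Lean document; each statement's English description precedes it below -/
import Mathlib

section
/- Let g ∈ 𝒮(ℝᵈ) with g real-valued and ‖g‖_{L²} = 1, and let f, h ∈ 𝒮(ℝᵈ). Then V_g(f·h)(x, ω) = ∫_{ℝ^{3d}} conj(g^(ω′ + ω″ − ω)) V_g f(x′, ω′) V_g h(x′, ω″) e^{2πi x·(ω′ + ω″ − ω)} dx′ dω′ dω″, i.e., the STFT of a pointwise product equals the Gabor product of the STFTs. -/
open MeasureTheory Complex

noncomputable section

abbrev Rd (d : ℕ) := EuclideanSpace ℝ (Fin d)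

/-- Fourier transform `f^(ω) = ∫ f(x) e^{-2πi x·ω} dx`. -/
def FT {d : ℕ} (f : Rd d → ℂ) (ω : Rd d) : ℂ :=
  ∫ x, f x * Complex.exp ((-2 * Real.pi * Complex.I) * ((inner ℝ x ω : ℝ) : ℂ))

/-- Short-time Fourier transform `V_g f(x,ω) = ∫ f(t) conj(g(t-x)) e^{-2πi ω·t} dt`. -/
def STFT {d : ℕ} (g f : Rd d → ℂ) (x ω : Rd d) : ℂ :=
  ∫ t, f t * (starRingEnd ℂ) (g (t - x)) *
    Complex.exp ((-2 * Real.pi * Complex.I) * ((inner ℝ ω t : ℝ) : ℂ))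

/-- The Gabor product `(F ♮_g H)(x,ω)`. -/
def gabor {d : ℕ} (g : Rd d → ℂ) (F H : Rd d × Rd d → ℂ) (x ω : Rd d) : ℂ :=
  ∫ xp, ∫ ωp, ∫ ωpp, (starRingEnd ℂ) (FT g (ωp + ωpp - ω)) * F (xp, ωp) * H (xp, ωpp) *
    Complex.exp ((2 * Real.pi * Complex.I) * ((inner ℝ x (ωp + ωpp - ω) : ℝ) : ℂ))

namespace GaborProofAux

open FourierTransform RealInnerProductSpace SchwartzMap

variable {d : ℕ}

def e (r : ℝ) : ℂ := Complex.exp (2 * Real.pi * Complex.I * r)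

lemma e_mul (a b : ℝ) : e a * e b = e (a + b) := by
  rw [e, e, e, ← Complex.exp_add]; congr 1; push_cast; ring

lemma norm_e (r : ℝ) : ‖e r‖ = 1 := by
  rw [e, show (2 * Real.pi * Complex.I * r) = (2 * Real.pi * r : ℝ) * Complex.I by push_cast; ring]
  exact Complex.norm_exp_ofReal_mul_I _

lemma conj_e (r : ℝ) : (starRingEnd ℂ) (e r) = e (-r) := by
  rw [e, e, ← Complex.exp_conj]; congr 1
  have : ((2 : ℂ) * Real.pi * Complex.I * r) = ((2 * Real.pi * r : ℝ) : ℂ) * Complex.I := by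
    push_cast; ring
  rw [this, map_mul, Complex.conj_I, Complex.conj_ofReal]; push_cast; ring

lemma fourierChar_eq_e (r : ℝ) : (Real.fourierChar r : ℂ) = e r := by
  rw [Real.fourierChar_apply, e]; congr 1; push_cast; ring

lemma fourier_eq (F : Rd d → ℂ) (w : Rd d) : 𝓕 F w = ∫ v, F v * e (-⟪v, w⟫) := by
  rw [Real.fourier_eq]
  refine integral_congr_ae (Filter.Eventually.of_forall fun v => ?_)
  simp only [Circle.smul_def, fourierChar_eq_e]
  exact mul_comm _ _

lemma fourierInv_eq (F : Rd d → ℂ) (w : Rd d) : 𝓕⁻ F w = ∫ v, F v * e ⟪v, w⟫ := by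
  rw [Real.fourierInv_eq]
  refine integral_congr_ae (Filter.Eventually.of_forall fun v => ?_)
  simp only [Circle.smul_def, fourierChar_eq_e]
  exact mul_comm _ _

abbrev S (d : ℕ) := SchwartzMap (Rd d) ℂ

lemma schwartzHTG (φ : S d) : Function.HasTemperateGrowth ⇑φ := by
  refine ⟨φ.smooth ⊤, fun n => ?_⟩
  obtain ⟨C, -, hC⟩ := φ.decay 0 n
  exact ⟨0, C, fun x => by simpa using hC x⟩

def mulS (φ ψ : S d) : S d :=
  SchwartzMap.bilinLeftCLM (ContinuousLinearMap.mul ℝ ℂ) (schwartzHTG ψ) φ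

@[simp] lemma mulS_apply (φ ψ : S d) (t : Rd d) : mulS φ ψ t = φ t * ψ t := by
  simp [mulS, SchwartzMap.bilinLeftCLM]
  rfl

lemma hasTemperateGrowth_sub_const (a : Rd d) :
    Function.HasTemperateGrowth (fun t : Rd d => t - a) := by
  apply Function.HasTemperateGrowth.of_fderiv (k := 1) (C := 1 + ‖a‖)
  · have : (fderiv ℝ (fun t : Rd d => t - a)) = fun _ => ContinuousLinearMap.id ℝ (Rd d) := by
      funext x
      rw [fderiv_sub_const, fderiv_id']
    rw [this]
    exact Function.HasTemperateGrowth.const _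
  · exact (differentiable_id.sub_const a)
  · intro x
    have h1 : ‖x - a‖ ≤ ‖x‖ + ‖a‖ := norm_sub_le x a
    have h2 : (0:ℝ) ≤ ‖x‖ := norm_nonneg x
    have h3 : (0:ℝ) ≤ ‖a‖ := norm_nonneg a
    calc ‖x - a‖ ≤ ‖x‖ + ‖a‖ := h1
    _ ≤ (1 + ‖a‖) * (1 + ‖x‖) ^ 1 := by nlinarith

def shiftS (a : Rd d) (φ : S d) : S d :=
  SchwartzMap.compCLM ℝ (hasTemperateGrowth_sub_const a)
    ⟨1, 1 + ‖a‖, fun x => by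
      have h1 : ‖x‖ ≤ ‖x - a‖ + ‖a‖ := by
        calc ‖x‖ = ‖x - a + a‖ := by rw [sub_add_cancel]
        _ ≤ ‖x - a‖ + ‖a‖ := norm_add_le _ _
      have h3 : (0:ℝ) ≤ ‖a‖ := norm_nonneg a
      have h4 : (0:ℝ) ≤ ‖x - a‖ := norm_nonneg _
      calc ‖x‖ ≤ ‖x - a‖ + ‖a‖ := h1
      _ ≤ (1 + ‖a‖) * (1 + ‖(fun t : Rd d => t - a) x‖) ^ 1 := by simp only [pow_one]; nlinarith⟩
    φ

@[simp] lemma shiftS_apply (a : Rd d) (φ : S d) (t : Rd d) : shiftS a φ t = φ (t - a) := rfl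

lemma schwartz_bound (φ : S d) : ∃ C : ℝ, 0 ≤ C ∧ ∀ t, ‖φ t‖ ≤ C := by
  obtain ⟨C, hCpos, hC⟩ := φ.decay 0 0
  exact ⟨C, hCpos.le, fun t => by simpa using hC t⟩

def FS (φ : S d) : S d := SchwartzMap.fourierTransformCLM ℂ φ

lemma FS_apply (φ : S d) : ⇑(FS φ) = 𝓕 ⇑φ := by
  simp [FS]; rfl

lemma inv_formula (φ : S d) (t : Rd d) : ∫ ξ, 𝓕 ⇑φ ξ * e ⟪ξ, t⟫ = φ t := by
  have h := Continuous.fourierInv_fourier_eq φ.continuous φ.integrable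
    (by rw [← FS_apply]; exact (FS φ).integrable)
  have := congrFun h t
  rw [← this]
  rw [fourierInv_eq]

lemma continuous_e : Continuous e := by
  unfold e; continuity

lemma integrable_prod_of_bound {F : Rd d × Rd d → ℂ} (hF : Continuous F) {a b : Rd d → ℝ}
    (ha : Integrable a) (hb : Integrable b) (hbd : ∀ p : Rd d × Rd d, ‖F p‖ ≤ a p.1 * b p.2) :
    Integrable F ((volume : Measure (Rd d)).prod volume) :=
  (ha.mul_prod hb).mono' hF.aestronglyMeasurable (Filter.Eventually.of_forall hbd)

lemma FT_cont (φ : S d) : Continuous (𝓕 ⇑φ) := by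
  rw [← FS_apply]; exact (FS φ).continuous

lemma FT_int (φ : S d) : Integrable (𝓕 ⇑φ) := by
  rw [← FS_apply]; exact (FS φ).integrable

lemma conv_FT (F H : S d) (ξ : Rd d) :
    ∫ ω', 𝓕 ⇑F ω' * 𝓕 ⇑H (ξ - ω') = 𝓕 ⇑(mulS F H) ξ := by
  have h1 : ∀ ω' : Rd d, 𝓕 ⇑F ω' * 𝓕 ⇑H (ξ - ω')
      = ∫ t, 𝓕 ⇑F ω' * (H t * e (-⟪t, ξ - ω'⟫)) := by
    intro ω'
    rw [fourier_eq (⇑H), ← integral_const_mul]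
  simp_rw [h1]
  have hint : Integrable (Function.uncurry fun ω' t =>
      𝓕 ⇑F ω' * (H t * e (-⟪t, ξ - ω'⟫))) ((volume : Measure (Rd d)).prod volume) := by
    apply integrable_prod_of_bound
    · apply ((FT_cont F).comp continuous_fst).mul
      apply (H.continuous.comp continuous_snd).mul
      exact continuous_e.comp ((continuous_snd.inner (continuous_const.sub continuous_fst)).neg)
    · exact (FT_int F).norm
    · exact H.integrable.norm
    · intro p
      simp only [Function.uncurry]
      rw [norm_mul, norm_mul, norm_e, mul_one]
  rw [integral_integral_swap hint]
  have h2 : ∀ t : Rd d, (∫ ω', 𝓕 ⇑F ω' * (H t * e (-⟪t, ξ - ω'⟫)))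
      = H t * e (-⟪t, ξ⟫) * F t := by
    intro t
    have h3 : ∀ ω' : Rd d, 𝓕 ⇑F ω' * (H t * e (-⟪t, ξ - ω'⟫))
        = (H t * e (-⟪t, ξ⟫)) * (𝓕 ⇑F ω' * e ⟪ω', t⟫) := by
      intro ω'
      rw [inner_sub_right, show -(⟪t,ξ⟫ - ⟪t,ω'⟫) = -⟪t,ξ⟫ + ⟪t,ω'⟫ by ring, ← e_mul,
        real_inner_comm ω' t]
      ring
    simp_rw [h3, integral_const_mul, inv_formula]
  simp_rw [h2]
  rw [fourier_eq (⇑(mulS F H))]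
  refine integral_congr_ae (Filter.Eventually.of_forall fun t => ?_)
  simp only [mulS_apply]; ring

lemma stepD (g K0 : S d) (hreal : ∀ t, (starRingEnd ℂ) (g t) = g t) (x ω : Rd d) :
    ∫ ξ, (starRingEnd ℂ) (𝓕 ⇑g (ξ - ω)) * e ⟪x, ξ - ω⟫ * 𝓕 ⇑K0 ξ
      = ∫ t, g (t - x) * K0 t * e (-⟪t, ω⟫) := by
  have hconj : ∀ η : Rd d, (starRingEnd ℂ) (𝓕 ⇑g η) = ∫ s, g s * e ⟪s, η⟫ := by
    intro η
    rw [fourier_eq, ← integral_conj]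
    refine integral_congr_ae (Filter.Eventually.of_forall fun s => ?_)
    beta_reduce
    rw [map_mul, conj_e, hreal, neg_neg]
  have h1 : ∀ ξ : Rd d, (starRingEnd ℂ) (𝓕 ⇑g (ξ - ω)) * e ⟪x, ξ - ω⟫ * 𝓕 ⇑K0 ξ
      = ∫ s, g s * 𝓕 ⇑K0 ξ * e ⟪s + x, ξ - ω⟫ := by
    intro ξ
    rw [hconj, ← integral_mul_const, ← integral_mul_const]
    refine integral_congr_ae (Filter.Eventually.of_forall fun s => ?_)
    beta_reduce
    rw [inner_add_left, ← e_mul]; ring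
  simp_rw [h1]
  have hint : Integrable (Function.uncurry fun ξ s =>
      g s * 𝓕 ⇑K0 ξ * e ⟪s + x, ξ - ω⟫) ((volume : Measure (Rd d)).prod volume) := by
    apply integrable_prod_of_bound (a := fun ξ => ‖𝓕 ⇑K0 ξ‖) (b := fun s => ‖g s‖)
    · apply ((g.continuous.comp continuous_snd).mul ((FT_cont K0).comp continuous_fst)).mul
      exact continuous_e.comp ((continuous_snd.add continuous_const).inner
        (continuous_fst.sub continuous_const))
    · exact (FT_int K0).norm
    · exact g.integrable.norm
    · intro p
      simp only [Function.uncurry]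
      rw [norm_mul, norm_mul, norm_e, mul_one, mul_comm]
  rw [integral_integral_swap hint]
  have h2 : ∀ s : Rd d, (∫ ξ, g s * 𝓕 ⇑K0 ξ * e ⟪s + x, ξ - ω⟫)
      = g ((s + x) - x) * K0 (s + x) * e (-⟪s + x, ω⟫) := by
    intro s
    have h3 : ∀ ξ : Rd d, g s * 𝓕 ⇑K0 ξ * e ⟪s + x, ξ - ω⟫
        = (g s * e (-⟪s + x, ω⟫)) * (𝓕 ⇑K0 ξ * e ⟪ξ, s + x⟫) := by
      intro ξ
      rw [inner_sub_right, show (⟪s+x,ξ⟫ - ⟪s+x,ω⟫ : ℝ) = -⟪s+x,ω⟫ + ⟪s+x,ξ⟫ by ring, ← e_mul,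
        real_inner_comm ξ (s+x)]
      ring
    simp_rw [h3, integral_const_mul, inv_formula]
    rw [add_sub_cancel_right]; ring
  simp_rw [h2]
  exact integral_add_right_eq_self (fun t => g (t - x) * K0 t * e (-⟪t, ω⟫)) x

lemma stepAB (g F H : S d) (x ω : Rd d) :
    (∫ ω', ∫ ω'', (starRingEnd ℂ) (𝓕 ⇑g (ω' + ω'' - ω)) * 𝓕 ⇑F ω' * 𝓕 ⇑H ω''
        * e ⟪x, ω' + ω'' - ω⟫)
    = ∫ ξ, (starRingEnd ℂ) (𝓕 ⇑g (ξ - ω)) * e ⟪x, ξ - ω⟫ * 𝓕 ⇑(mulS F H) ξ := by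
  have h1 : ∀ ω' : Rd d, (∫ ω'', (starRingEnd ℂ) (𝓕 ⇑g (ω' + ω'' - ω)) * 𝓕 ⇑F ω' * 𝓕 ⇑H ω''
        * e ⟪x, ω' + ω'' - ω⟫)
      = ∫ ξ, (starRingEnd ℂ) (𝓕 ⇑g (ξ - ω)) * e ⟪x, ξ - ω⟫ * (𝓕 ⇑F ω' * 𝓕 ⇑H (ξ - ω')) := by
    intro ω'
    rw [← integral_add_left_eq_self (fun ξ => (starRingEnd ℂ) (𝓕 ⇑g (ξ - ω)) * e ⟪x, ξ - ω⟫
      * (𝓕 ⇑F ω' * 𝓕 ⇑H (ξ - ω'))) ω']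
    refine integral_congr_ae (Filter.Eventually.of_forall fun ω'' => ?_)
    beta_reduce
    rw [add_sub_cancel_left]; ring
  simp_rw [h1]
  obtain ⟨CH, hCH0, hCH⟩ := schwartz_bound (FS H)
  rw [FS_apply] at hCH
  have hint : Integrable (Function.uncurry fun ω' ξ =>
      (starRingEnd ℂ) (𝓕 ⇑g (ξ - ω)) * e ⟪x, ξ - ω⟫ * (𝓕 ⇑F ω' * 𝓕 ⇑H (ξ - ω')))
      ((volume : Measure (Rd d)).prod volume) := by
    apply integrable_prod_of_bound (a := fun ω' => ‖𝓕 ⇑F ω'‖ * CH)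
      (b := fun ξ => ‖𝓕 ⇑g (ξ - ω)‖)
    · apply Continuous.mul
      · apply Continuous.mul
        · exact Complex.continuous_conj.comp ((FT_cont g).comp (continuous_snd.sub
            continuous_const))
        · exact continuous_e.comp (continuous_const.inner (continuous_snd.sub continuous_const))
      · exact ((FT_cont F).comp continuous_fst).mul ((FT_cont H).comp
          (continuous_snd.sub continuous_fst))
    · exact ((FT_int F).norm.mul_const CH)
    · exact (FT_int g).norm.comp_sub_right ω
    · intro p
      simp only [Function.uncurry]
      rw [norm_mul, norm_mul, norm_mul, norm_e, mul_one, RCLike.norm_conj]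
      calc ‖𝓕 ⇑g (p.2 - ω)‖ * (‖𝓕 ⇑F p.1‖ * ‖𝓕 ⇑H (p.2 - p.1)‖)
          = (‖𝓕 ⇑F p.1‖ * ‖𝓕 ⇑H (p.2 - p.1)‖) * ‖𝓕 ⇑g (p.2 - ω)‖ := mul_comm _ _
        _ ≤ (‖𝓕 ⇑F p.1‖ * CH) * ‖𝓕 ⇑g (p.2 - ω)‖ := by gcongr; exact hCH _
  rw [integral_integral_swap hint]
  refine integral_congr_ae (Filter.Eventually.of_forall fun ξ => ?_)
  beta_reduce
  rw [integral_const_mul, conv_FT]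

lemma stepE (ρ q : S d) (ω : Rd d) :
    (∫ x' : Rd d, ∫ t, ρ t * e (-⟪t, ω⟫) * q (t - x'))
      = (∫ u, q u) * ∫ t, ρ t * e (-⟪t, ω⟫) := by
  have hmeas : AEStronglyMeasurable (Function.uncurry fun x' t : Rd d =>
      ρ t * e (-⟪t, ω⟫) * q (t - x')) ((volume : Measure (Rd d)).prod volume) := by
    apply Continuous.aestronglyMeasurable
    apply Continuous.mul
    · exact (ρ.continuous.comp continuous_snd).mul
        (continuous_e.comp ((continuous_snd.inner continuous_const).neg))
    · exact q.continuous.comp (continuous_snd.sub continuous_fst)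
  have hint : Integrable (Function.uncurry fun x' t : Rd d =>
      ρ t * e (-⟪t, ω⟫) * q (t - x')) ((volume : Measure (Rd d)).prod volume) := by
    rw [integrable_prod_iff' hmeas]
    constructor
    · refine Filter.Eventually.of_forall fun t => ?_
      have : Integrable (fun x' : Rd d => q (t - x')) := q.integrable.comp_sub_left t
      simpa [Function.uncurry] using this.const_mul (ρ t * e (-⟪t, ω⟫))
    · have heq : ∀ t : Rd d, (∫ x' : Rd d, ‖ρ t * e (-⟪t, ω⟫) * q (t - x')‖)
          = ‖ρ t‖ * ∫ u, ‖q u‖ := by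
        intro t
        have : ∀ x' : Rd d, ‖ρ t * e (-⟪t, ω⟫) * q (t - x')‖ = ‖ρ t‖ * ‖q (t - x')‖ := by
          intro x'; rw [norm_mul, norm_mul, norm_e, mul_one]
        simp_rw [this, integral_const_mul]
        rw [integral_sub_left_eq_self (fun u => ‖q u‖) volume t]
      refine (Integrable.congr (ρ.integrable.norm.mul_const (∫ u, ‖q u‖)) ?_)
      exact Filter.Eventually.of_forall fun t => (heq t).symm
  rw [integral_integral_swap hint]
  have h2 : ∀ t : Rd d, (∫ x' : Rd d, ρ t * e (-⟪t, ω⟫) * q (t - x'))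
      = (ρ t * e (-⟪t, ω⟫)) * ∫ u, q u := by
    intro t
    rw [integral_const_mul, integral_sub_left_eq_self (fun u => q u) volume t]
  simp_rw [h2, integral_mul_const]
  ring

lemma g_sq_integral (g : S d) (hreal : ∀ t, (starRingEnd ℂ) (g t) = g t)
    (hnorm : eLpNorm (⇑g) 2 (volume : Measure (Rd d)) = 1) :
    (∫ u, g u * g u) = (1 : ℂ) := by
  have hmem : MemLp (⇑g) 2 (volume : Measure (Rd d)) :=
    ⟨g.continuous.aestronglyMeasurable, by rw [hnorm]; exact ENNReal.one_lt_top⟩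
  have h2 := hmem.eLpNorm_eq_integral_rpow_norm (by norm_num) (by norm_num)
  rw [hnorm] at h2
  have htoReal : (2 : ENNReal).toReal = 2 := by norm_num
  rw [htoReal] at h2
  set I := ∫ a, ‖g a‖ ^ (2:ℝ) with hI
  have hInonneg : 0 ≤ I := by
    apply integral_nonneg
    intro a
    positivity
  have hre : I ^ (2:ℝ)⁻¹ = 1 := ENNReal.ofReal_eq_one.mp h2.symm
  have hIeq : I = 1 := by
    have : (I ^ (2:ℝ)⁻¹) ^ (2:ℝ) = I := by
      rw [← Real.rpow_mul hInonneg]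
      norm_num
    rw [hre] at this
    simpa using this.symm
  have hpt : ∀ u, g u * g u = ((‖g u‖ ^ (2:ℝ) : ℝ) : ℂ) := by
    intro u
    nth_rewrite 2 [← hreal u]
    rw [Complex.mul_conj, Complex.normSq_eq_norm_sq]
    rw [show ‖g u‖ ^ (2:ℝ) = ‖g u‖ ^ (2:ℕ) from by
      rw [← Real.rpow_natCast (‖g u‖) 2]; norm_num]
  simp_rw [hpt]
  rw [show ∫ u : Rd d, ((‖g u‖ ^ (2:ℝ) : ℝ) : ℂ) = ((∫ u : Rd d, ‖g u‖ ^ (2:ℝ) : ℝ) : ℂ) from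
    integral_ofReal]
  rw [← hI, hIeq]
  norm_num


lemma exp_neg_eq_e (r : ℝ) :
    Complex.exp ((-2 * Real.pi * Complex.I) * (r : ℂ)) = e (-r) := by
  unfold e; congr 1; push_cast; ring

lemma exp_pos_eq_e (r : ℝ) :
    Complex.exp ((2 * Real.pi * Complex.I) * (r : ℂ)) = e r := rfl

lemma FT_eq_fourier (F : Rd d → ℂ) (w : Rd d) : FT F w = 𝓕 F w := by
  unfold FT
  rw [fourier_eq]
  refine integral_congr_ae (Filter.Eventually.of_forall fun v => ?_)
  beta_reduce
  rw [exp_neg_eq_e]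

lemma STFT_eq (g f : S d) (hreal : ∀ t, (starRingEnd ℂ) (g t) = g t) (x ω : Rd d) :
    STFT ⇑g ⇑f x ω = 𝓕 ⇑(mulS f (shiftS x g)) ω := by
  unfold STFT
  rw [fourier_eq]
  refine integral_congr_ae (Filter.Eventually.of_forall fun t => ?_)
  beta_reduce
  rw [hreal, real_inner_comm ω t, exp_neg_eq_e]
  simp

lemma STFT_prod_eq (g f h : S d) (hreal : ∀ t, (starRingEnd ℂ) (g t) = g t) (x ω : Rd d) :
    STFT ⇑g (fun t => f t * h t) x ω
      = ∫ t, (mulS (mulS f h) (shiftS x g)) t * e (-⟪t, ω⟫) := by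
  unfold STFT
  refine integral_congr_ae (Filter.Eventually.of_forall fun t => ?_)
  beta_reduce
  rw [hreal, real_inner_comm ω t, exp_neg_eq_e]
  simp

end GaborProofAux

open GaborProofAux FourierTransform RealInnerProductSpace

theorem stft_of_product_eq_gabor {d : ℕ} (g f h : SchwartzMap (Rd d) ℂ)
    (hreal : ∀ t, (starRingEnd ℂ) (g t) = g t)
    (hnorm : eLpNorm (⇑g) 2 (volume : Measure (Rd d)) = 1) :
    ∀ x ω : Rd d, STFT (⇑g) (fun t => f t * h t) x ω =
      gabor (⇑g) (fun p => STFT (⇑g) (⇑f) p.1 p.2) (fun p => STFT (⇑g) (⇑h) p.1 p.2) x ω := by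
  intro x ω
  have hrw : ∀ xp : Rd d, (∫ ωp, ∫ ωpp, (starRingEnd ℂ) (FT ⇑g (ωp + ωpp - ω)) *
        STFT ⇑g ⇑f xp ωp * STFT ⇑g ⇑h xp ωpp *
        Complex.exp ((2 * Real.pi * Complex.I) * ((⟪x, ωp + ωpp - ω⟫ : ℝ) : ℂ)))
      = ∫ t, (mulS (mulS f h) (shiftS x g)) t * e (-⟪t, ω⟫) * (mulS g g) (t - xp) := by
    intro xp
    have h1 : (∫ ωp, ∫ ωpp, (starRingEnd ℂ) (FT ⇑g (ωp + ωpp - ω)) *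
        STFT ⇑g ⇑f xp ωp * STFT ⇑g ⇑h xp ωpp *
        Complex.exp ((2 * Real.pi * Complex.I) * ((⟪x, ωp + ωpp - ω⟫ : ℝ) : ℂ)))
        = ∫ ωp, ∫ ωpp, (starRingEnd ℂ) (𝓕 ⇑g (ωp + ωpp - ω)) *
          𝓕 ⇑(mulS f (shiftS xp g)) ωp * 𝓕 ⇑(mulS h (shiftS xp g)) ωpp
          * e ⟪x, ωp + ωpp - ω⟫ := by
      refine integral_congr_ae (Filter.Eventually.of_forall fun ωp => ?_)
      refine integral_congr_ae (Filter.Eventually.of_forall fun ωpp => ?_)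
      beta_reduce
      rw [FT_eq_fourier, STFT_eq g f hreal, STFT_eq g h hreal, exp_pos_eq_e]
    rw [h1, stepAB g (mulS f (shiftS xp g)) (mulS h (shiftS xp g)) x ω,
      stepD g (mulS (mulS f (shiftS xp g)) (mulS h (shiftS xp g))) hreal x ω]
    refine integral_congr_ae (Filter.Eventually.of_forall fun t => ?_)
    simp only [mulS_apply, shiftS_apply]
    ring
  have hgab : gabor (⇑g) (fun p => STFT (⇑g) (⇑f) p.1 p.2)
      (fun p => STFT (⇑g) (⇑h) p.1 p.2) x ω
      = ∫ xp : Rd d, ∫ t, (mulS (mulS f h) (shiftS x g)) t * e (-⟪t, ω⟫)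
          * (mulS g g) (t - xp) := by
    unfold gabor
    refine integral_congr_ae (Filter.Eventually.of_forall fun xp => ?_)
    exact hrw xp
  rw [hgab, stepE (mulS (mulS f h) (shiftS x g)) (mulS g g) ω]
  have hone : (∫ u, (mulS g g) u) = (1 : ℂ) := by
    have : (∫ u, (mulS g g) u) = ∫ u, g u * g u :=
      integral_congr_ae (Filter.Eventually.of_forall fun u => by simp)
    rw [this, g_sq_integral g hreal hnorm]
  rw [hone, one_mul, STFT_prod_eq g f h hreal x ω]
end
end

section
/- Let g ∈ 𝒮(ℝᵈ)∖{0}, F, H ∈ 𝒮(ℝ^{2d}), and u, v, η, ρ, σ ∈ ℝᵈ. Then the Gabor product satisfies the covariance property (M_{(η,−u)} T_{(v,ρ)} F) ♮_g (M_{(−η,−u)} T_{(v,σ)} H) = M_{(0,−u)} T_{(u, ρ+σ)} (F ♮_g H), where (T_{(u,η)} F)(x, ω) = F(x−u, ω−η) and (M_{(η,u)} F)(x, ω) = e^{2πi(x·η + ω·u)} F(x, ω). -/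
open MeasureTheory Complex

noncomputable section

/-- Translation on phase space. -/
def T2 {d : ℕ} (u η : Rd d) (F : Rd d × Rd d → ℂ) (p : Rd d × Rd d) : ℂ := F (p.1 - u, p.2 - η)

/-- Modulation on phase space. -/
def M2 {d : ℕ} (η u : Rd d) (F : Rd d × Rd d → ℂ) (p : Rd d × Rd d) : ℂ :=
  Complex.exp ((2 * Real.pi * Complex.I) * ((((inner ℝ p.1 η : ℝ) + (inner ℝ p.2 u : ℝ)) : ℝ) : ℂ)) * F p

theorem gabor_covariance {d : ℕ} (g : SchwartzMap (Rd d) ℂ) (hg : ⇑g ≠ 0)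
    (F H : SchwartzMap (Rd d × Rd d) ℂ) (u v η ρ σ : Rd d) :
    ∀ x ω : Rd d,
      gabor (⇑g) (M2 η (-u) (T2 v ρ (⇑F))) (M2 (-η) (-u) (T2 v σ (⇑H))) x ω =
        M2 0 (-u) (T2 u (ρ + σ) (fun p => gabor (⇑g) (⇑F) (⇑H) p.1 p.2)) (x, ω) := by
  intro x ω
  simp only [gabor, M2, T2]
  rw [← integral_add_right_eq_self (fun xp => ∫ ωp, ∫ ωpp,
      (starRingEnd ℂ) (FT (⇑g) (ωp + ωpp - ω)) *
        (Complex.exp ((2 * Real.pi * Complex.I) * ((((inner ℝ xp η : ℝ) + (inner ℝ ωp (-u) : ℝ)) : ℝ) : ℂ)) *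
          F (xp - v, ωp - ρ)) *
        (Complex.exp ((2 * Real.pi * Complex.I) * ((((inner ℝ xp (-η) : ℝ) + (inner ℝ ωpp (-u) : ℝ)) : ℝ) : ℂ)) *
          H (xp - v, ωpp - σ)) *
        Complex.exp ((2 * Real.pi * Complex.I) * ((inner ℝ x (ωp + ωpp - ω) : ℝ) : ℂ))) v]
  simp only [← integral_const_mul]
  congr 1
  funext xp
  rw [← integral_add_right_eq_self (fun ωp => ∫ ωpp,
      (starRingEnd ℂ) (FT (⇑g) (ωp + ωpp - ω)) *
        (Complex.exp ((2 * Real.pi * Complex.I) * ((((inner ℝ (xp + v) η : ℝ) + (inner ℝ ωp (-u) : ℝ)) : ℝ) : ℂ)) *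
          F (xp + v - v, ωp - ρ)) *
        (Complex.exp ((2 * Real.pi * Complex.I) * ((((inner ℝ (xp + v) (-η) : ℝ) + (inner ℝ ωpp (-u) : ℝ)) : ℝ) : ℂ)) *
          H (xp + v - v, ωpp - σ)) *
        Complex.exp ((2 * Real.pi * Complex.I) * ((inner ℝ x (ωp + ωpp - ω) : ℝ) : ℂ))) ρ]
  congr 1
  funext ωp
  rw [← integral_add_right_eq_self (fun ωpp =>
      (starRingEnd ℂ) (FT (⇑g) (ωp + ρ + ωpp - ω)) *
        (Complex.exp ((2 * Real.pi * Complex.I) * ((((inner ℝ (xp + v) η : ℝ) + (inner ℝ (ωp + ρ) (-u) : ℝ)) : ℝ) : ℂ)) *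
          F (xp + v - v, ωp + ρ - ρ)) *
        (Complex.exp ((2 * Real.pi * Complex.I) * ((((inner ℝ (xp + v) (-η) : ℝ) + (inner ℝ ωpp (-u) : ℝ)) : ℝ) : ℂ)) *
          H (xp + v - v, ωpp - σ)) *
        Complex.exp ((2 * Real.pi * Complex.I) * ((inner ℝ x (ωp + ρ + ωpp - ω) : ℝ) : ℂ))) σ]
  congr 1
  funext ωpp
  simp only [add_sub_cancel_right]
  have hvec : ωp + ρ + (ωpp + σ) - ω = ωp + ωpp - (ω - (ρ + σ)) := by abel
  rw [hvec]
  set C := (starRingEnd ℂ) (FT (⇑g) (ωp + ωpp - (ω - (ρ + σ))))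
  have key : Complex.exp ((2 * Real.pi * Complex.I) * ((((inner ℝ (xp + v) η : ℝ) + (inner ℝ (ωp + ρ) (-u) : ℝ)) : ℝ) : ℂ)) *
      Complex.exp ((2 * Real.pi * Complex.I) * ((((inner ℝ (xp + v) (-η) : ℝ) + (inner ℝ (ωpp + σ) (-u) : ℝ)) : ℝ) : ℂ)) *
      Complex.exp ((2 * Real.pi * Complex.I) * ((inner ℝ x (ωp + ωpp - (ω - (ρ + σ))) : ℝ) : ℂ)) =
      Complex.exp ((2 * Real.pi * Complex.I) * ((((inner ℝ x (0 : Rd d) : ℝ) + (inner ℝ ω (-u) : ℝ)) : ℝ) : ℂ)) *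
      Complex.exp ((2 * Real.pi * Complex.I) * ((inner ℝ (x - u) (ωp + ωpp - (ω - (ρ + σ))) : ℝ) : ℂ)) := by
    rw [← Complex.exp_add, ← Complex.exp_add, ← Complex.exp_add]
    congr 1
    rw [← mul_add, ← mul_add, ← mul_add]
    congr 1
    push_cast
    simp only [inner_add_left, inner_add_right, inner_sub_left, inner_sub_right,
      inner_neg_left, inner_neg_right, inner_zero_right, real_inner_comm u]
    push_cast
    ring
  linear_combination (C * F (xp, ωp) * H (xp, ωpp)) * key
end
end

section
/- Let g ∈ 𝒮(ℝᵈ) with conj(g) = g. Define, for F on ℝ^{2d}, F*(x, ω) = conj(F(x, −ω)). Then for all F, H ∈ 𝒮(ℝ^{2d}) the Gabor product satisfies (F ♮_g H)* = H* ♮_g F*. -/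
open MeasureTheory Complex FourierTransform

noncomputable section

variable {d : ℕ}

lemma FT_eq_fourier (f : Rd d → ℂ) : FT f = 𝓕 f := by
  funext w
  rw [Real.fourier_eq']
  unfold FT
  congr 1
  funext v
  rw [smul_eq_mul, mul_comm]
  congr 1
  push_cast
  ring_nf

lemma FT_continuous (g : SchwartzMap (Rd d) ℂ) : Continuous (FT ⇑g) := by
  rw [FT_eq_fourier]
  exact VectorFourier.fourierIntegral_continuous Real.continuous_fourierChar
    (by exact continuous_inner) g.integrable

lemma FT_bound (g : SchwartzMap (Rd d) ℂ) (w : Rd d) : ‖FT ⇑g w‖ ≤ ∫ x, ‖g x‖ := by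
  rw [FT_eq_fourier]
  exact VectorFourier.norm_fourierIntegral_le_integral_norm _ _ _ _ _

lemma FT_conj_neg (g : SchwartzMap (Rd d) ℂ)
    (hreal : ∀ t, (starRingEnd ℂ) (g t) = g t) (s : Rd d) :
    (starRingEnd ℂ) (FT ⇑g (-s)) = FT ⇑g s := by
  unfold FT
  rw [← integral_conj]
  congr 1
  funext t
  rw [map_mul, hreal, ← Complex.exp_conj]
  congr 1
  have h1 : (inner ℝ t (-s) : ℝ) = -(inner ℝ t s : ℝ) := by
    simp [inner_neg_right]
  simp only [map_mul, map_neg, Complex.conj_ofReal, Complex.conj_I, h1, map_ofNat]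
  push_cast
  ring_nf

lemma htg_pair (x : Rd d) :
    Function.HasTemperateGrowth (fun w : Rd d => ((x, w) : Rd d × Rd d)) := by
  apply Function.HasTemperateGrowth.of_fderiv (k := 1) (C := ‖x‖ + 1)
  · have : (fderiv ℝ (fun w : Rd d => ((x, w) : Rd d × Rd d))) =
        fun _ => (ContinuousLinearMap.inr ℝ (Rd d) (Rd d)) := by
      funext w
      have h : HasFDerivAt (fun w : Rd d => ((x, w) : Rd d × Rd d))
          (ContinuousLinearMap.inr ℝ (Rd d) (Rd d)) w := hasFDerivAt_prodMk_right x w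
      exact h.fderiv
    rw [this]
    exact Function.HasTemperateGrowth.const _
  · exact (differentiable_const x).prodMk differentiable_id
  · intro w
    have : ‖((x, w) : Rd d × Rd d)‖ = max ‖x‖ ‖w‖ := rfl
    rw [this]
    have h1 : max ‖x‖ ‖w‖ ≤ ‖x‖ + ‖w‖ :=
      max_le (le_add_of_nonneg_right (norm_nonneg _)) (le_add_of_nonneg_left (norm_nonneg _))
    have hx : (0:ℝ) ≤ ‖x‖ := norm_nonneg _
    have hw : (0:ℝ) ≤ ‖w‖ := norm_nonneg _
    calc max ‖x‖ ‖w‖ ≤ ‖x‖ + ‖w‖ := h1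
    _ ≤ (‖x‖ + 1) * (1 + ‖w‖) ^ 1 := by nlinarith

def gslice (x : Rd d) (F : SchwartzMap (Rd d × Rd d) ℂ) : SchwartzMap (Rd d) ℂ :=
  SchwartzMap.compCLM ℝ (htg_pair x)
    ⟨1, 1, fun w => by
      have : ‖w‖ ≤ ‖((x, w) : Rd d × Rd d)‖ := le_max_right _ _
      simpa using this.trans (by exact le_add_of_nonneg_left zero_le_one)⟩ F

lemma gslice_apply (x : Rd d) (F : SchwartzMap (Rd d × Rd d) ℂ) (w : Rd d) :
    gslice x F w = F (x, w) := rfl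

lemma gslice_integrable_conj (x : Rd d) (F : SchwartzMap (Rd d × Rd d) ℂ) :
    Integrable (fun w : Rd d => (starRingEnd ℂ) (F (x, w))) := by
  refine (gslice x F).integrable.norm.mono' ?_ ?_
  · exact (Complex.continuous_conj.comp (F.continuous.comp (by continuity))).aestronglyMeasurable
  · exact Filter.Eventually.of_forall fun w => by simp [gslice_apply]

lemma conj_exp_mul (c r : ℝ) :
    (starRingEnd ℂ) (Complex.exp ((c : ℂ) * Complex.I * (r : ℂ))) =
      Complex.exp (-((c : ℂ) * Complex.I * (r : ℂ))) := by
  rw [← Complex.exp_conj]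
  congr 1
  simp only [map_mul, Complex.conj_ofReal, Complex.conj_I]
  ring

lemma norm_exp_mul_I_neg (c r : ℝ) :
    ‖Complex.exp (-((c : ℂ) * Complex.I * (r : ℂ)))‖ = 1 := by
  have : -((c : ℂ) * Complex.I * (r : ℂ)) = ((-(c * r) : ℝ) : ℂ) * Complex.I := by
    push_cast; ring
  rw [this, Complex.norm_exp_ofReal_mul_I]

theorem gabor_involution {d : ℕ} (g : SchwartzMap (Rd d) ℂ)
    (hreal : ∀ t, (starRingEnd ℂ) (g t) = g t)
    (F H : SchwartzMap (Rd d × Rd d) ℂ) :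
    ∀ x ω : Rd d,
      (starRingEnd ℂ) (gabor (⇑g) (⇑F) (⇑H) x (-ω)) =
        gabor (⇑g) (fun p => (starRingEnd ℂ) (H (p.1, -p.2)))
          (fun p => (starRingEnd ℂ) (F (p.1, -p.2))) x ω := by
  intro x ω
  have hconjg := FT_conj_neg g hreal
  unfold gabor
  rw [← integral_conj]
  refine integral_congr_ae (Filter.Eventually.of_forall fun xp => ?_)
  -- the symmetric integrand
  set Φ : Rd d → Rd d → ℂ := fun a b =>
    FT ⇑g (a + b + ω) * (starRingEnd ℂ) (F (xp, a)) * (starRingEnd ℂ) (H (xp, b)) *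
      Complex.exp (-((2 * Real.pi : ℝ) * Complex.I * ((inner ℝ x (a + b + ω) : ℝ) : ℂ))) with hΦ
  have hπ : ((2 : ℂ) * (Real.pi : ℂ)) = (((2 * Real.pi : ℝ)) : ℂ) := by push_cast; ring
  have hΦint : Integrable (Function.uncurry Φ)
      ((volume : Measure (Rd d)).prod volume) := by
    have hFH : Integrable
        (fun p : Rd d × Rd d => (starRingEnd ℂ) (F (xp, p.1)) * (starRingEnd ℂ) (H (xp, p.2)))
        ((volume : Measure (Rd d)).prod volume) :=
      (gslice_integrable_conj xp F).mul_prod (gslice_integrable_conj xp H)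
    have heq : Function.uncurry Φ = fun p : Rd d × Rd d =>
        (FT ⇑g (p.1 + p.2 + ω) *
          Complex.exp (-((2 * Real.pi : ℝ) * Complex.I * ((inner ℝ x (p.1 + p.2 + ω) : ℝ) : ℂ)))) *
        ((starRingEnd ℂ) (F (xp, p.1)) * (starRingEnd ℂ) (H (xp, p.2))) := by
      funext p
      simp only [Function.uncurry, hΦ]
      ring
    rw [heq]
    refine hFH.bdd_mul (c := ∫ t, ‖g t‖) ?_ ?_
    · have hc1 : Continuous fun p : Rd d × Rd d => p.1 + p.2 + ω :=
        (continuous_fst.add continuous_snd).add continuous_const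
      have hc2 : Continuous fun p : Rd d × Rd d =>
          -((2 * Real.pi : ℝ) * Complex.I * ((inner ℝ x (p.1 + p.2 + ω) : ℝ) : ℂ)) := by
        refine Continuous.neg (Continuous.mul continuous_const ?_)
        exact Complex.continuous_ofReal.comp (Continuous.inner continuous_const hc1)
      exact (((FT_continuous g).comp hc1).mul
        (Complex.continuous_exp.comp hc2)).aestronglyMeasurable
    · refine Filter.Eventually.of_forall (fun p => (?_ : ‖_‖ ≤ ∫ t, ‖g t‖))
      rw [norm_mul]
      rw [norm_exp_mul_I_neg (2 * Real.pi) (inner ℝ x (p.1 + p.2 + ω) : ℝ), mul_one]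
      exact FT_bound g _
  -- left side
  have hL : (starRingEnd ℂ)
      (∫ ωp, ∫ ωpp, (starRingEnd ℂ) (FT ⇑g (ωp + ωpp - -ω)) * F (xp, ωp) * H (xp, ωpp) *
        Complex.exp ((2 * Real.pi * Complex.I) * ((inner ℝ x (ωp + ωpp - -ω) : ℝ) : ℂ))) =
      ∫ a, ∫ b, Φ a b := by
    rw [← integral_conj]
    refine integral_congr_ae (Filter.Eventually.of_forall fun a => ?_)
    dsimp only
    rw [← integral_conj]
    refine integral_congr_ae (Filter.Eventually.of_forall fun b => ?_)
    dsimp only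
    simp only [sub_neg_eq_add, map_mul, Complex.conj_conj, hΦ]
    rw [hπ, conj_exp_mul]
  -- right side
  have hR : (∫ ωp, ∫ ωpp,
        (starRingEnd ℂ) (FT ⇑g (ωp + ωpp - ω)) * (starRingEnd ℂ) (H (xp, -ωp)) *
          (starRingEnd ℂ) (F (xp, -ωpp)) *
          Complex.exp ((2 * Real.pi * Complex.I) * ((inner ℝ x (ωp + ωpp - ω) : ℝ) : ℂ))) =
      ∫ a, ∫ b, Φ b a := by
    rw [← integral_neg_eq_self]
    refine integral_congr_ae (Filter.Eventually.of_forall fun a => ?_)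
    dsimp only
    rw [← integral_neg_eq_self]
    refine integral_congr_ae (Filter.Eventually.of_forall fun b => ?_)
    dsimp only
    have hsum : -a + -b - ω = -(b + a + ω) := by abel
    have hinner2 : ((inner ℝ x (-(b + a + ω)) : ℝ) : ℂ) = -((inner ℝ x (b + a + ω) : ℝ) : ℂ) := by
      rw [inner_neg_right]; push_cast; ring
    simp only [hsum, neg_neg, hΦ]
    rw [hconjg (b + a + ω), hπ, hinner2, mul_neg]
    ring
  dsimp only
  rw [hL, integral_integral_swap hΦint]
  exact hR.symm
end
end
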